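/- For each permutation σ in the symmetric group Σ_{n+1}, the map φ_σ is a cochain automorphism of the Aomoto complex (𝖠•(G), e_y) of the general position type G of n hyperplanes in ℂ^ℓ; that is, φ_σ is invertible and commutes with the differential given by multiplication by e_y. -/

import Mathlib

/-!
STATEMENT 11: For each permutation σ in the symmetric group Σ_{n+1}, the induced map
φ_σ is a cochain automorphism of the Aomoto complex (𝖠•(G), e_y) of the general
position type G of n hyperplanes in ℂ^ℓ: it is invertible and commutes with the
differential (multiplication by e_y).
-/


open scoped Classical

noncomputable section

/-- The coefficient ring `R = ℂ[y₁,…,y_n]`. -/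
abbrev Rpoly (n : ℕ) : Type := MvPolynomial (Fin n) ℂ

/-- Index type for the basis `{e_S}` of the degree `q` part of the rank-`ℓ`
truncation of the exterior algebra on `e₁,…,e_n`. -/
abbrev TFinset (n ℓ q : ℕ) : Type := {S : Finset (Fin n) // S.card = q ∧ q ≤ ℓ}

/-- Degree `q` part of the (rank-`ℓ` truncated) Aomoto complex, with coefficients in
a commutative `ℂ`-algebra `C`. -/
abbrev AomotoDeg (n ℓ q : ℕ) (C : Type*) : Type _ := TFinset n ℓ q → C

def posIn {n : ℕ} (j : Fin n) (S : Finset (Fin n)) : ℕ := (S.filter (· < j)).card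

variable {n ℓ : ℕ}

/-- Left multiplication by the generator `e_j`. -/
def wedgeT (C : Type*) [CommRing C] (q : ℕ) (j : Fin n) :
    AomotoDeg n ℓ q C →ₗ[C] AomotoDeg n ℓ (q + 1) C where
  toFun x V :=
    if h : j ∈ V.1 then
      ((-1 : C) ^ posIn j (V.1.erase j)) *
        x ⟨V.1.erase j, by
          refine ⟨by simp [Finset.card_erase_of_mem h, V.2.1], Nat.le_of_succ_le V.2.2⟩⟩
    else 0
  map_add' x y := by
    funext V
    by_cases h : j ∈ V.1 <;> simp [h, mul_add]
  map_smul' c x := by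
    funext V
    by_cases h : j ∈ V.1 <;> simp [h, mul_left_comm]

/-- Multiplication by `e_y = ∑ y_j ⊗ e_j`, the differential of the Aomoto complex. -/
def dAomoto (n ℓ : ℕ) (q : ℕ) :
    AomotoDeg n ℓ q (Rpoly n) →ₗ[Rpoly n] AomotoDeg n ℓ (q + 1) (Rpoly n) :=
  ∑ j : Fin n, (MvPolynomial.X j : Rpoly n) • wedgeT (C := Rpoly n) (n := n) (ℓ := ℓ) q j


/-- `E k` for `k ∈ [n+1]`: the vector of coordinates of `e_k`, with `e_{n+1} = 0`
(so that `σ(e_i) = E(σ(i)) − E(σ(n+1))` gives the `Σ_{n+1}`-action on generators). -/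
def Evec (n : ℕ) : Fin (n + 1) → (Fin n → ℂ) :=
  Fin.lastCases 0 (fun j => Pi.single j 1)

/-- The coordinates (in the basis `e₁,…,e_n`) of the image `σ(e_i)` of a generator
under `σ ∈ Σ_{n+1}`. -/
def sigVec {n : ℕ} (σ : Equiv.Perm (Fin (n + 1))) (i : Fin n) : Fin n → ℂ :=
  Evec n (σ i.castSucc) - Evec n (σ (Fin.last n))

/-- The variables `y₁,…,y_n, y_{n+1}`, with `y_{n+1} = −∑ y_j`. -/
def yImg (n : ℕ) : Fin (n + 1) → Rpoly n :=
  Fin.lastCases (-(∑ j : Fin n, MvPolynomial.X j)) MvPolynomial.X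

/-- The substitution `f(y₁,…,y_n) ↦ f(y_{σ(1)},…,y_{σ(n)})` on coefficients. -/
def tauSig {n : ℕ} (σ : Equiv.Perm (Fin (n + 1))) : Rpoly n →ₐ[ℂ] Rpoly n :=
  MvPolynomial.aeval (fun j : Fin n => yImg n (σ j.castSucc))

/-- The coefficient of `e_V` in `σ(e_{s₁}) ∧ ⋯ ∧ σ(e_{s_q})` (for `S = (s₁<…<s_q)`):
a `q × q` determinant. -/
def detCoef {n ℓ q : ℕ} (σ : Equiv.Perm (Fin (n + 1))) (S V : TFinset n ℓ q) : ℂ :=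
  Matrix.det (Matrix.of fun a b : Fin q =>
    sigVec σ ((S.1.orderIsoOfFin S.2.1 a : Fin n)) ((V.1.orderIsoOfFin V.2.1 b : Fin n)))

/-- The cochain map `φ_σ` induced by `σ ∈ Σ_{n+1}` on the Aomoto complex of the
general position arrangement:
`φ_σ(e_{i₁}⋯e_{i_p} ⊗ f(y)) = σ(e_{i₁})⋯σ(e_{i_p}) ⊗ f(y_{σ(1)},…,y_{σ(n)})`. -/
def phiSig (ℓ : ℕ) {n : ℕ} (σ : Equiv.Perm (Fin (n + 1))) (q : ℕ) :
    AomotoDeg n ℓ q (Rpoly n) →ₗ[ℂ] AomotoDeg n ℓ q (Rpoly n) :=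
  ∑ S : TFinset n ℓ q, ∑ V : TFinset n ℓ q,
    (LinearMap.single ℂ (fun _ : TFinset n ℓ q => Rpoly n) V).comp
      ((LinearMap.mulLeft ℂ (MvPolynomial.C (detCoef σ S V))).comp
        ((tauSig σ).toLinearMap.comp
          ((LinearMap.proj (R := ℂ) (φ := fun _ : TFinset n ℓ q => Rpoly n) S))))


/-- A permutation `σ_S ∈ Σ_{n+1}` sending `i ↦ s_i` (for `S = (s₁ < s₂ < ⋯ < s_k)`). -/
def sigS {n : ℕ} (S : Finset (Fin (n + 1))) : Equiv.Perm (Fin (n + 1)) :=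
  (finCongr (by simp [Finset.card_add_card_compl])).trans
    (finSumFinEquiv.symm.trans
      ((Equiv.sumCongr (S.orderIsoOfFin rfl).toEquiv ((Sᶜ).orderIsoOfFin rfl).toEquiv).trans
        ((Equiv.sumCongr (Equiv.refl _)
            (Equiv.subtypeEquivRight (fun x => Finset.mem_compl))).trans
          (Equiv.sumCompl (· ∈ S)))))

/-- The elementary linear map sending `e_W ↦ c · e_V` (and all other basis vectors
to `0`). -/
def entryMap {n ℓ q : ℕ} (c : Rpoly n) (W V : TFinset n ℓ q) :
    AomotoDeg n ℓ q (Rpoly n) →ₗ[Rpoly n] AomotoDeg n ℓ q (Rpoly n) :=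
  (LinearMap.single (Rpoly n) (fun _ : TFinset n ℓ q => Rpoly n) V).comp
    (c • LinearMap.proj W)

/-- The first `k` elements `[k] = {1,…,k}` of `[n]`, as a subset of `Fin n`. -/
def S0set (n k : ℕ) : Finset (Fin n) := Finset.univ.filter fun i => (i : ℕ) < k

/-- The part `e_T ↦ y_j ∂e_{(j,T)}` (for `S₀ ≡ (j,T)`) of the formal connection
endomorphism `ω̃_{S₀}`, `S₀ = [p+1]`, in degree `p`. -/
def omegaBase₁ (n ℓ p : ℕ) :
    AomotoDeg n ℓ p (Rpoly n) →ₗ[Rpoly n] AomotoDeg n ℓ p (Rpoly n) :=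
  ∑ V : TFinset n ℓ p,
    if V.1 ⊆ S0set n (p + 1) ∧ (S0set n (p + 1)).card = p + 1 then
      (∑ t ∈ (S0set n (p + 1) \ V.1).attach, entryMap (MvPolynomial.X t.1) V V) +
        ∑ t ∈ (S0set n (p + 1) \ V.1).attach, ∑ j ∈ V.1.attach,
          entryMap
            (((-1 : Rpoly n) ^
                (posIn t.1 (insert t.1 (V.1.erase j.1)) + 1 + posIn j.1 (V.1.erase j.1))) *
              MvPolynomial.X j.1)
            ⟨insert t.1 (V.1.erase j.1), by
              have ht : t.1 ∉ V.1.erase j.1 := fun hc =>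
                (Finset.mem_sdiff.mp t.2).2 (Finset.mem_of_mem_erase hc)
              have hj : j.1 ∈ V.1 := j.2
              have hp : 1 ≤ p := by
                have h0 := Finset.card_pos.mpr ⟨j.1, hj⟩
                rw [V.2.1] at h0
                omega
              refine ⟨?_, V.2.2⟩
              rw [Finset.card_insert_of_notMem ht, Finset.card_erase_of_mem hj, V.2.1]
              omega⟩
            V
    else 0


/-- The part `e_T ↦ e_y ∂e_T` (for `S₀ ≡ T`) of the formal connection endomorphism
`ω̃_{S₀}`, `S₀ = [p]`, in degree `p`. -/
def omegaBase₂ (n ℓ p : ℕ) :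
    AomotoDeg n ℓ p (Rpoly n) →ₗ[Rpoly n] AomotoDeg n ℓ p (Rpoly n) :=
  if hc : (S0set n p).card = p then
    ∑ V : TFinset n ℓ p,
      entryMap
        (∑ u ∈ (S0set n p).attach, ∑ j ∈ V.1.attach,
          if V.1.erase j.1 = (S0set n p).erase u.1 then
            ((-1 : Rpoly n) ^
                (posIn u.1 ((S0set n p).erase u.1) + posIn j.1 ((S0set n p).erase u.1))) *
              MvPolynomial.X j.1
          else 0)
        ⟨S0set n p, hc, V.2.2⟩ V
  else 0

/-- The formal connection endomorphism `ω̃_{S₀}` for `S₀ = [q+1]`, in degree `p`: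
`ω̃^p_{S₀}(e_T) = y_j ∂e_{(j,T)}` if `p = q` and `S₀ ≡ (j,T)`;
`ω̃^p_{S₀}(e_T) = e_y ∂e_T` if `p = q+1` and `S₀ ≡ T`; and `0` otherwise. -/
def omegaBase (n ℓ : ℕ) (q p : ℕ) :
    AomotoDeg n ℓ p (Rpoly n) →ₗ[Rpoly n] AomotoDeg n ℓ p (Rpoly n) :=
  if p = q then omegaBase₁ n ℓ p else if p = q + 1 then omegaBase₂ n ℓ p else 0

/-- The formal connection endomorphism `ω̃_S` of the Aomoto complex of the general
position arrangement, for `S ⊆ [n+1]` of cardinality `q+1`: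
`ω̃_S = φ_{σ_S} ∘ ω̃_{[q+1]} ∘ φ_{σ_S}⁻¹`. -/
def omegaS (ℓ : ℕ) {n : ℕ} (S : Finset (Fin (n + 1))) (p : ℕ) :
    AomotoDeg n ℓ p (Rpoly n) →ₗ[ℂ] AomotoDeg n ℓ p (Rpoly n) :=
  (phiSig ℓ (sigS S) p).comp
    (((omegaBase n ℓ (S.card - 1) p).restrictScalars ℂ).comp
      (phiSig ℓ (sigS S)⁻¹ p))

end


noncomputable section AuxProof

open Equiv (Perm)

section Combinatorial
variable {N : ℕ}



lemma sum_dite_mem {α β : Type*} [Fintype α] [DecidableEq α] [AddCommMonoid β] (s : Finset α)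
    (F : ∀ j, j ∈ s → β) :
    (∑ j, if h : j ∈ s then F j h else 0) = ∑ j ∈ s.attach, F j.1 j.2 := by
  rw [← Finset.sum_subset (Finset.subset_univ s) (fun x _ hx => dif_neg hx),
    ← Finset.sum_attach s (fun j => if h : j ∈ s then F j h else 0)]
  exact Finset.sum_congr rfl fun j _ => dif_pos j.2

lemma posIn_orderIsoOfFin (s : Finset (Fin N)) {k : ℕ} (h : s.card = k) (b : Fin k) :
    posIn (s.orderIsoOfFin h b : Fin N) s = (b : ℕ) := by
  have himg : s.filter (· < (s.orderIsoOfFin h b : Fin N)) =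
      (Finset.Iio b).image (fun a => (s.orderIsoOfFin h a : Fin N)) := by
    ext x
    simp only [Finset.mem_filter, Finset.mem_image, Finset.mem_Iio]
    constructor
    · rintro ⟨hxs, hlt⟩
      refine ⟨(s.orderIsoOfFin h).symm ⟨x, hxs⟩, ?_, by simp⟩
      have : s.orderIsoOfFin h ((s.orderIsoOfFin h).symm ⟨x, hxs⟩) < s.orderIsoOfFin h b := by
        simpa [← Subtype.coe_lt_coe] using hlt
      exact (s.orderIsoOfFin h).lt_iff_lt.mp this
    · rintro ⟨a, hab, rfl⟩
      refine ⟨Finset.orderEmbOfFin_mem s h a, ?_⟩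
      simpa [← Subtype.coe_lt_coe] using (s.orderIsoOfFin h).strictMono hab
  rw [posIn, himg, Finset.card_image_of_injective _ ?_, Fin.card_Iio]
  intro a a' haa
  exact (s.orderIsoOfFin h).injective (Subtype.ext haa)

lemma posIn_erase (j : Fin N) (s : Finset (Fin N)) : posIn j (s.erase j) = posIn j s := by
  unfold posIn
  rw [Finset.filter_erase, Finset.erase_eq_of_notMem]
  simp [Finset.mem_filter]

lemma orderIsoOfFin_posIn (s : Finset (Fin N)) {k : ℕ} (h : s.card = k) {j : Fin N}
    (hj : j ∈ s) (hp : posIn j s < k) :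
    (s.orderIsoOfFin h ⟨posIn j s, hp⟩ : Fin N) = j := by
  set b := (s.orderIsoOfFin h).symm ⟨j, hj⟩ with hb
  have hco : (s.orderIsoOfFin h b : Fin N) = j := by rw [hb]; simp
  have hpb : posIn j s = (b : ℕ) := by rw [← hco]; exact posIn_orderIsoOfFin s h b
  have : (⟨posIn j s, hp⟩ : Fin k) = b := Fin.ext hpb
  rw [this, hco]

lemma orderIsoOfFin_erase (s : Finset (Fin N)) {k : ℕ} (h : s.card = k + 1) (b : Fin (k + 1))
    (h' : (s.erase (s.orderIsoOfFin h b : Fin N)).card = k) (c : Fin k) :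
    ((s.erase (s.orderIsoOfFin h b : Fin N)).orderIsoOfFin h' c : Fin N) =
      (s.orderIsoOfFin h (b.succAbove c) : Fin N) := by
  have key : (fun c : Fin k => (s.orderIsoOfFin h (b.succAbove c) : Fin N)) =
      ⇑((s.erase (s.orderIsoOfFin h b : Fin N)).orderEmbOfFin h') := by
    apply Finset.orderEmbOfFin_unique h'
    · intro x
      refine Finset.mem_erase.mpr ⟨?_, Finset.orderEmbOfFin_mem s h (b.succAbove x)⟩
      simp only [Finset.coe_orderIsoOfFin_apply]
      exact (s.orderEmbOfFin h).injective.ne (b.succAbove_ne x)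
    · exact fun x y hxy => (s.orderIsoOfFin h).strictMono (b.strictMono_succAbove hxy)
  rw [Finset.coe_orderIsoOfFin_apply, ← key]

lemma orderIsoOfFin_congr {s t : Finset (Fin N)} (hst : s = t) {k : ℕ} (h : s.card = k)
    (h' : t.card = k) (c : Fin k) :
    (s.orderIsoOfFin h c : Fin N) = (t.orderIsoOfFin h' c : Fin N) := by
  subst hst; rfl

end Combinatorial

section TauSig


lemma yImg_sum (n : ℕ) : ∑ k : Fin (n + 1), yImg n k = 0 := by
  rw [Fin.sum_univ_castSucc]
  simp [yImg]

lemma tauSig_X {n : ℕ} (σ : Perm (Fin (n + 1))) (j : Fin n) :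
    tauSig σ (MvPolynomial.X j) = yImg n (σ j.castSucc) := by
  simp [tauSig]

lemma tauSig_yImg {n : ℕ} (σ : Perm (Fin (n + 1))) (k : Fin (n + 1)) :
    tauSig σ (yImg n k) = yImg n (σ k) := by
  induction k using Fin.lastCases with
  | last =>
    have h1 : ∑ k : Fin (n + 1), yImg n (σ k) = 0 := by
      rw [Equiv.sum_comp σ (yImg n)]; exact yImg_sum n
    have h2 : ∑ j : Fin n, yImg n (σ j.castSucc) = -yImg n (σ (Fin.last n)) := by
      rw [Fin.sum_univ_castSucc] at h1
      linear_combination h1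
    have hl : yImg n (Fin.last n) = -(∑ j : Fin n, MvPolynomial.X j) := by simp [yImg]
    rw [hl, map_neg, map_sum]
    simp only [tauSig_X]
    rw [h2, neg_neg]
  | cast j => simp [yImg, tauSig]

lemma tauSig_comp {n : ℕ} (σ τ : Perm (Fin (n + 1))) (f : Rpoly n) :
    tauSig σ (tauSig τ f) = tauSig (σ * τ) f := by
  have h : (tauSig σ).comp (tauSig τ) = tauSig (σ * τ) := by
    apply MvPolynomial.algHom_ext
    intro j
    simp only [AlgHom.comp_apply, tauSig_X, tauSig_yImg, Equiv.Perm.mul_apply]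
  exact DFunLike.congr_fun h f

lemma tauSig_one {n : ℕ} (f : Rpoly n) : tauSig (1 : Perm (Fin (n + 1))) f = f := by
  have h : tauSig (1 : Perm (Fin (n + 1))) = AlgHom.id ℂ (Rpoly n) := by
    apply MvPolynomial.algHom_ext
    intro j
    simp [tauSig_X, yImg]
  rw [h]; rfl

lemma tauSig_C {n : ℕ} (σ : Perm (Fin (n + 1))) (c : ℂ) :
    tauSig σ (MvPolynomial.C c) = MvPolynomial.C c := by
  simp [tauSig]

lemma sigVec_comp {n : ℕ} (σ τ : Perm (Fin (n + 1))) (i u : Fin n) :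
    sigVec (σ * τ) i u = ∑ m : Fin n, sigVec τ i m * sigVec σ m u := by
  have g : ∀ k : Fin (n + 1), (∑ m : Fin n, Evec n k m * sigVec σ m u)
      = Evec n (σ k) u - Evec n (σ (Fin.last n)) u := by
    intro k
    induction k using Fin.lastCases with
    | last => simp [Evec]
    | cast j =>
      simp only [Evec, Fin.lastCases_castSucc]
      rw [Finset.sum_eq_single j (fun m _ hm => by simp [Pi.single_apply, hm]) (by simp)]
      simp [sigVec, Evec]
  have hexp : ∑ m : Fin n, sigVec τ i m * sigVec σ m u
      = (∑ m : Fin n, Evec n (τ i.castSucc) m * sigVec σ m u)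
        - ∑ m : Fin n, Evec n (τ (Fin.last n)) m * sigVec σ m u := by
    rw [← Finset.sum_sub_distrib]
    exact Finset.sum_congr rfl fun m _ => by rw [← sub_mul]; rfl
  show Evec n ((σ * τ) i.castSucc) u - Evec n ((σ * τ) (Fin.last n)) u = _
  rw [hexp, g, g]
  simp only [Equiv.Perm.mul_apply]
  ring

lemma sigVec_one {n : ℕ} (i u : Fin n) :
    sigVec (1 : Perm (Fin (n + 1))) i u = (1 : Matrix (Fin n) (Fin n) ℂ) i u := by
  simp [sigVec, Evec, Matrix.one_apply, Pi.single_apply, eq_comm]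

end TauSig

section CB
open Finset


lemma image_orderIsoOfFin {α : Type*} [LinearOrder α] {q : ℕ} (V : Finset α) (hV : V.card = q)
    (π : Equiv.Perm (Fin q)) :
    Finset.image (fun i => (V.orderIsoOfFin hV (π i) : α)) Finset.univ = V := by
  ext x
  simp only [Finset.mem_image, Finset.mem_univ, true_and]
  constructor
  · rintro ⟨i, rfl⟩
    exact Finset.orderEmbOfFin_mem V hV (π i)
  · intro hx
    exact ⟨π.symm ((V.orderIsoOfFin hV).symm ⟨x, hx⟩), by simp⟩

/-- Cauchy–Binet formula. -/
theorem cauchy_binet {R : Type*} [CommRing R] {q n : ℕ}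
    (A : Matrix (Fin q) (Fin n) R) (B : Matrix (Fin n) (Fin q) R) :
    (A * B).det = ∑ V : {V : Finset (Fin n) // V.card = q},
      (A.submatrix id (fun b => (V.1.orderIsoOfFin V.2 b : Fin n))).det *
        (B.submatrix (fun a => (V.1.orderIsoOfFin V.2 a : Fin n)) id).det := by
  classical
  set f := (Matrix.detRowAlternating : (Fin q → R) [⋀^Fin q]→ₗ[R] R) with hf
  have h1 : (A * B).det = f (fun i => ∑ m : Fin n, A i m • B m) := by
    congr 1
    funext i j
    simp [Matrix.mul_apply, Finset.sum_apply]
  have h2 : f (fun i => ∑ m : Fin n, A i m • B m)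
      = ∑ r : Fin q → Fin n, (∏ i, A i (r i)) • f (fun i => B (r i)) := by
    rw [← f.coe_multilinearMap]
    rw [f.toMultilinearMap.map_sum (g := fun i m => A i m • B m)]
    exact Finset.sum_congr rfl fun r _ => f.toMultilinearMap.map_smul_univ _ _
  have h3 : ∑ r : Fin q → Fin n, (∏ i, A i (r i)) • f (fun i => B (r i))
      = ∑ r ∈ Finset.univ.filter (fun r : Fin q → Fin n => Function.Injective r),
          (∏ i, A i (r i)) • f (fun i => B (r i)) := by
    refine (Finset.sum_subset (Finset.filter_subset _ _) fun r _ hr => ?_).symm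
    have hni : ¬Function.Injective r := by simpa using hr
    have : ¬Function.Injective (fun i => B (r i)) := by
      intro hc
      obtain ⟨a, b, hab, hne⟩ : ∃ a b, r a = r b ∧ a ≠ b := by
        rw [Function.Injective] at hni; push_neg at hni; exact hni
      exact hne (hc (congrArg B hab))
    rw [f.map_eq_zero_of_not_injective _ this, smul_zero]
  -- reindex injective functions by (V, π)
  have h4 : ∑ r ∈ Finset.univ.filter (fun r : Fin q → Fin n => Function.Injective r),
        (∏ i, A i (r i)) • f (fun i => B (r i))
      = ∑ p : {V : Finset (Fin n) // V.card = q} × Equiv.Perm (Fin q),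
          (∏ i, A i (p.1.1.orderIsoOfFin p.1.2 (p.2 i))) •
            f (fun i => B (p.1.1.orderIsoOfFin p.1.2 (p.2 i))) := by
    refine (Finset.sum_bij
      (fun (p : {V : Finset (Fin n) // V.card = q} × Equiv.Perm (Fin q)) _ =>
        (fun i => (p.1.1.orderIsoOfFin p.1.2 (p.2 i) : Fin n)))
      ?_ ?_ ?_ ?_).symm
    · rintro ⟨V, π⟩ -
      refine Finset.mem_filter.mpr ⟨Finset.mem_univ _, ?_⟩
      intro a b hab
      exact π.injective ((V.1.orderIsoOfFin V.2).injective (Subtype.ext hab))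
    · intro p1 h1 p2 h2 hpp
      obtain ⟨V, π⟩ := p1
      obtain ⟨V', π'⟩ := p2
      simp only [] at hpp
      have hVV : V = V' := by
        apply Subtype.ext
        rw [← image_orderIsoOfFin V.1 V.2 π, ← image_orderIsoOfFin V'.1 V'.2 π', hpp]
      subst hVV
      refine Prod.ext rfl (Equiv.ext fun i => ?_)
      have := congrFun hpp i
      exact (V.1.orderIsoOfFin V.2).injective (Subtype.ext this)
    · intro r hrf
      have hr : Function.Injective r := (Finset.mem_filter.mp hrf).2
      have hcard : (Finset.image r Finset.univ).card = q := by
        rw [Finset.card_image_of_injective _ hr, Finset.card_univ, Fintype.card_fin]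
      set V : {V : Finset (Fin n) // V.card = q} := ⟨Finset.image r Finset.univ, hcard⟩
      have hmem : ∀ i, r i ∈ V.1 := fun i => Finset.mem_image_of_mem r (Finset.mem_univ i)
      have hinj : Function.Injective
          (fun i => (V.1.orderIsoOfFin V.2).symm ⟨r i, hmem i⟩) := by
        intro a b hab
        apply hr
        have := congrArg (fun z => ((V.1.orderIsoOfFin V.2) z : Fin n)) hab
        simpa using this
      obtain ⟨π, hπ⟩ : ∃ π : Equiv.Perm (Fin q),
          ∀ i, π i = (V.1.orderIsoOfFin V.2).symm ⟨r i, hmem i⟩ :=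
        ⟨Equiv.ofBijective _ ((Finite.injective_iff_bijective).mp hinj), fun i => rfl⟩
      refine ⟨⟨V, π⟩, Finset.mem_univ _, ?_⟩
      funext i
      simp only [hπ i]
      simp
    · rintro ⟨V, π⟩ -
      rfl
  rw [h1, h2, h3, h4, Fintype.sum_prod_type]
  refine Finset.sum_congr rfl fun V _ => ?_
  -- now fixed V
  have hdetB : ∀ π : Equiv.Perm (Fin q), f (fun i => B (V.1.orderIsoOfFin V.2 (π i)))
      = ((Equiv.Perm.sign π : ℤ) : R) *
        (B.submatrix (fun a => (V.1.orderIsoOfFin V.2 a : Fin n)) id).det := by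
    intro π
    have := f.map_perm (fun i => B (V.1.orderIsoOfFin V.2 i)) π
    rw [show (fun i => B (V.1.orderIsoOfFin V.2 (π i)))
        = (fun i => B (V.1.orderIsoOfFin V.2 i)) ∘ π from rfl, this]
    rw [show f (fun i => B (V.1.orderIsoOfFin V.2 i))
        = (B.submatrix (fun a => (V.1.orderIsoOfFin V.2 a : Fin n)) id).det from rfl]
    simp [Units.smul_def, zsmul_eq_mul]
  have key : ∑ π : Equiv.Perm (Fin q),
      ((Equiv.Perm.sign π : ℤ) : R) * ∏ i, A i (V.1.orderIsoOfFin V.2 (π i))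
      = (A.submatrix id (fun b => (V.1.orderIsoOfFin V.2 b : Fin n))).det := by
    rw [Matrix.det_apply']
    refine Fintype.sum_equiv (Equiv.inv (Equiv.Perm (Fin q))) _ _ fun π => ?_
    have hprod : ∏ i, A i (V.1.orderIsoOfFin V.2 (π i))
        = ∏ i, A (π⁻¹ i) (V.1.orderIsoOfFin V.2 i) := by
      rw [← Equiv.prod_comp π (fun j => A (π⁻¹ j) (V.1.orderIsoOfFin V.2 j))]
      exact Finset.prod_congr rfl fun i _ => by simp
    rw [hprod]
    simp [Matrix.submatrix_apply]
  calc ∑ π : Equiv.Perm (Fin q),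
        (∏ i, A i (V.1.orderIsoOfFin V.2 (π i))) •
          f (fun i => B (V.1.orderIsoOfFin V.2 (π i)))
      = ∑ π : Equiv.Perm (Fin q),
        (((Equiv.Perm.sign π : ℤ) : R) * ∏ i, A i (V.1.orderIsoOfFin V.2 (π i))) *
          (B.submatrix (fun a => (V.1.orderIsoOfFin V.2 a : Fin n)) id).det := by
        refine Finset.sum_congr rfl fun π _ => ?_
        rw [hdetB π, smul_eq_mul]
        ring
    _ = _ := by
        rw [← Finset.sum_mul, key]

end CB

section Phi

variable {n ℓ : ℕ}

def Amat {n : ℕ} (σ : Perm (Fin (n + 1))) : Matrix (Fin n) (Fin n) ℂ :=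
  Matrix.of fun i u => sigVec σ i u

lemma Amat_mul {n : ℕ} (σ τ : Perm (Fin (n + 1))) : Amat (σ * τ) = Amat τ * Amat σ := by
  ext i u
  simp [Amat, Matrix.mul_apply, sigVec_comp]

lemma detCoef_eq {q : ℕ} (σ : Perm (Fin (n + 1))) (S V : TFinset n ℓ q) :
    detCoef σ S V = ((Amat σ).submatrix
      (fun a => (S.1.orderIsoOfFin S.2.1 a : Fin n))
      (fun b => (V.1.orderIsoOfFin V.2.1 b : Fin n))).det := rfl

lemma detCoef_mul {q : ℕ} (σ τ : Perm (Fin (n + 1))) (S U : TFinset n ℓ q) :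
    detCoef (σ * τ) S U = ∑ V : TFinset n ℓ q, detCoef τ S V * detCoef σ V U := by
  rw [detCoef_eq, Amat_mul]
  have hsub : ((Amat τ * Amat σ).submatrix
      (fun a => (S.1.orderIsoOfFin S.2.1 a : Fin n))
      (fun b => (U.1.orderIsoOfFin U.2.1 b : Fin n)))
      = ((Amat τ).submatrix (fun a => (S.1.orderIsoOfFin S.2.1 a : Fin n)) id) *
        ((Amat σ).submatrix id (fun b => (U.1.orderIsoOfFin U.2.1 b : Fin n))) := by
    exact Matrix.submatrix_mul (Amat τ) (Amat σ) _ id _ Function.bijective_id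
  rw [hsub, cauchy_binet]
  refine (Fintype.sum_equiv (Equiv.subtypeEquivRight (q := fun V : Finset (Fin n) => V.card = q)
    (fun V => ⟨fun h => h.1, fun h => ⟨h, U.2.2⟩⟩)) _ _ fun V => ?_).symm
  rw [detCoef_eq, detCoef_eq]
  simp only [Matrix.submatrix_submatrix, Function.comp_def, Function.id_def]
  rfl

lemma detCoef_one {q : ℕ} (S U : TFinset n ℓ q) :
    detCoef (1 : Perm (Fin (n + 1))) S U = if S = U then 1 else 0 := by
  have hA : Amat (1 : Perm (Fin (n + 1))) = (1 : Matrix (Fin n) (Fin n) ℂ) := by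
    ext i u
    exact sigVec_one i u
  rw [detCoef_eq, hA]
  by_cases hSU : S = U
  · subst hSU
    rw [if_pos rfl]
    have : ((1 : Matrix (Fin n) (Fin n) ℂ).submatrix
        (fun a => (S.1.orderIsoOfFin S.2.1 a : Fin n))
        (fun b => (S.1.orderIsoOfFin S.2.1 b : Fin n))) = 1 := by
      ext a b
      simp only [Matrix.submatrix_apply, Matrix.one_apply]
      by_cases hab : a = b
      · simp [hab]
      · rw [if_neg hab, if_neg]
        intro hc
        exact hab ((S.1.orderIsoOfFin S.2.1).injective (Subtype.ext hc))
    rw [this, Matrix.det_one]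
  · rw [if_neg hSU]
    obtain ⟨a, ha⟩ : ∃ a, (S.1.orderIsoOfFin S.2.1 a : Fin n) ∉ U.1 := by
      by_contra hc
      push_neg at hc
      apply hSU
      apply Subtype.ext
      apply Finset.eq_of_subset_of_card_le
      · intro x hx
        have : x = (S.1.orderIsoOfFin S.2.1 ((S.1.orderIsoOfFin S.2.1).symm ⟨x, hx⟩) : Fin n) := by
          simp
        rw [this]
        exact hc _
      · rw [S.2.1, U.2.1]
    apply Matrix.det_eq_zero_of_row_eq_zero a
    intro b
    simp only [Matrix.submatrix_apply, Matrix.one_apply]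
    rw [if_neg]
    intro hc
    rw [hc] at ha
    exact ha (Finset.orderEmbOfFin_mem U.1 U.2.1 b)

lemma phiSig_apply {q : ℕ} (σ : Perm (Fin (n + 1))) (x : AomotoDeg n ℓ q (Rpoly n))
    (U : TFinset n ℓ q) :
    phiSig ℓ σ q x U
      = ∑ S : TFinset n ℓ q, MvPolynomial.C (detCoef σ S U) * tauSig σ (x S) := by
  unfold phiSig
  simp only [LinearMap.coe_sum, Finset.sum_apply, LinearMap.coe_comp, Function.comp_apply,
    LinearMap.coe_single, LinearMap.mulLeft_apply, AlgHom.toLinearMap_apply, LinearMap.proj_apply]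
  refine Finset.sum_congr rfl fun S _ => ?_
  simp [Finset.sum_pi_single]

lemma phiSig_phiSig {q : ℕ} (σ τ : Perm (Fin (n + 1))) (x : AomotoDeg n ℓ q (Rpoly n)) :
    phiSig ℓ σ q (phiSig ℓ τ q x) = phiSig ℓ (σ * τ) q x := by
  funext U
  rw [phiSig_apply, phiSig_apply]
  have lhs : ∑ V : TFinset n ℓ q, MvPolynomial.C (detCoef σ V U) * tauSig σ (phiSig ℓ τ q x V)
      = ∑ V : TFinset n ℓ q, ∑ S : TFinset n ℓ q,
          MvPolynomial.C (detCoef τ S V * detCoef σ V U) * tauSig (σ * τ) (x S) := by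
    refine Finset.sum_congr rfl fun V _ => ?_
    rw [phiSig_apply, map_sum, Finset.mul_sum]
    refine Finset.sum_congr rfl fun S _ => ?_
    rw [map_mul, tauSig_C, tauSig_comp, map_mul]
    ring
  rw [lhs, Finset.sum_comm]
  refine Finset.sum_congr rfl fun S _ => ?_
  rw [detCoef_mul, map_sum, Finset.sum_mul]

lemma phiSig_one {q : ℕ} (x : AomotoDeg n ℓ q (Rpoly n)) :
    phiSig ℓ (1 : Perm (Fin (n + 1))) q x = x := by
  funext U
  rw [phiSig_apply]
  have : ∀ S : TFinset n ℓ q,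
      MvPolynomial.C (detCoef (1 : Perm (Fin (n + 1))) S U) * tauSig 1 (x S)
      = if S = U then x S else 0 := by
    intro S
    rw [detCoef_one, tauSig_one]
    by_cases h : S = U <;> simp [h]
  rw [Finset.sum_congr rfl fun S _ => this S, Finset.sum_ite_eq' Finset.univ U]
  simp

lemma phiSig_bijective {q : ℕ} (σ : Perm (Fin (n + 1))) :
    Function.Bijective (phiSig ℓ σ q : AomotoDeg n ℓ q (Rpoly n) → AomotoDeg n ℓ q (Rpoly n)) := by
  refine Function.bijective_iff_has_inverse.mpr ⟨phiSig ℓ σ⁻¹ q, fun x => ?_, fun x => ?_⟩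
  · rw [phiSig_phiSig, inv_mul_cancel, phiSig_one]
  · rw [phiSig_phiSig, mul_inv_cancel, phiSig_one]

end Phi


section Diff

variable {n ℓ : ℕ}

def eraseT {q : ℕ} (W : TFinset n ℓ (q + 1)) (j : Fin n) (h : j ∈ W.1) : TFinset n ℓ q :=
  ⟨W.1.erase j, by simp [Finset.card_erase_of_mem h, W.2.1], Nat.le_of_succ_le W.2.2⟩

def insT {q : ℕ} (T : TFinset n ℓ q) (j : Fin n) (h : j ∉ T.1) (hl : q + 1 ≤ ℓ) :
    TFinset n ℓ (q + 1) :=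
  ⟨insert j T.1, by rw [Finset.card_insert_of_notMem h, T.2.1], hl⟩

lemma dAomoto_apply {q : ℕ} (x : AomotoDeg n ℓ q (Rpoly n)) (W : TFinset n ℓ (q + 1)) :
    dAomoto n ℓ q x W = ∑ j : Fin n, (if h : j ∈ W.1 then
      MvPolynomial.X j * ((-1 : Rpoly n) ^ posIn j (W.1.erase j) * x (eraseT W j h))
      else 0) := by
  unfold dAomoto wedgeT
  simp only [LinearMap.coe_sum, Finset.sum_apply, LinearMap.smul_apply, LinearMap.coe_mk,
    AddHom.coe_mk, Pi.smul_apply, smul_eq_mul]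
  refine Finset.sum_congr rfl fun j _ => ?_
  by_cases h : j ∈ W.1
  · rw [dif_pos h, dif_pos h]; rfl
  · rw [dif_neg h, dif_neg h, mul_zero]

def Mmat {q : ℕ} (σ : Perm (Fin (n + 1))) (T : TFinset n ℓ q) (W : TFinset n ℓ (q + 1)) :
    Matrix (Fin (q + 1)) (Fin (q + 1)) (Rpoly n) :=
  Matrix.of (Fin.cons (fun b => MvPolynomial.X (W.1.orderIsoOfFin W.2.1 b : Fin n))
    (fun a b => MvPolynomial.C
      (sigVec σ (T.1.orderIsoOfFin T.2.1 a) (W.1.orderIsoOfFin W.2.1 b))))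

lemma claimA {q : ℕ} (σ : Perm (Fin (n + 1))) (T : TFinset n ℓ q) (W : TFinset n ℓ (q + 1)) :
    (∑ j : Fin n, if h : j ∈ W.1 then
        MvPolynomial.X j * ((-1 : Rpoly n) ^ posIn j (W.1.erase j) *
          MvPolynomial.C (detCoef σ T (eraseT W j h))) else 0)
      = (Mmat σ T W).det := by
  rw [sum_dite_mem W.1 (fun j h =>
      MvPolynomial.X j * ((-1 : Rpoly n) ^ posIn j (W.1.erase j) *
        MvPolynomial.C (detCoef σ T (eraseT W j h)))), ← Finset.univ_eq_attach,
    ← Equiv.sum_comp (W.1.orderIsoOfFin W.2.1).toEquiv, Matrix.det_succ_row_zero]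
  refine Finset.sum_congr rfl fun b _ => ?_
  simp only [RelIso.coe_fn_toEquiv]
  have hpos : posIn ((W.1.orderIsoOfFin W.2.1 b : Fin n))
      (W.1.erase (W.1.orderIsoOfFin W.2.1 b : Fin n)) = (b : ℕ) := by
    rw [posIn_erase, posIn_orderIsoOfFin]
  have hdc : detCoef σ T (eraseT W (W.1.orderIsoOfFin W.2.1 b : Fin n)
        (W.1.orderIsoOfFin W.2.1 b).2)
      = (Matrix.of fun a c => sigVec σ ((T.1.orderIsoOfFin T.2.1 a : Fin n))
          ((W.1.orderIsoOfFin W.2.1 (b.succAbove c) : Fin n))).det := by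
    unfold detCoef
    congr 1
    ext a c
    simp only [Matrix.of_apply]
    congr 1
    exact orderIsoOfFin_erase W.1 W.2.1 b _ c
  have hminor : ((Mmat σ T W).submatrix Fin.succ b.succAbove)
      = (Matrix.of fun a c => sigVec σ ((T.1.orderIsoOfFin T.2.1 a : Fin n))
          ((W.1.orderIsoOfFin W.2.1 (b.succAbove c) : Fin n))).map
            ⇑(MvPolynomial.C : ℂ →+* Rpoly n) := by
    ext a c
    simp [Mmat, Matrix.submatrix_apply, Fin.cons_succ, Matrix.map_apply]
  have hmz : Mmat σ T W 0 b = MvPolynomial.X (W.1.orderIsoOfFin W.2.1 b : Fin n) := rfl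
  rw [hpos, hdc, hminor, hmz, ← RingHom.mapMatrix_apply, ← RingHom.map_det]
  ring

lemma sum_yImg {n : ℕ} (σ : Perm (Fin (n + 1))) :
    ∑ j : Fin n, yImg n (σ j.castSucc) = -yImg n (σ (Fin.last n)) := by
  have h1 : ∑ k : Fin (n + 1), yImg n (σ k) = 0 := by
    rw [Equiv.sum_comp σ (yImg n)]; exact yImg_sum n
  rw [Fin.sum_univ_castSucc] at h1
  linear_combination h1

lemma X_eq_sum_sigVec {n : ℕ} (σ : Perm (Fin (n + 1))) (u : Fin n) :
    (MvPolynomial.X u : Rpoly n)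
      = ∑ j : Fin n, yImg n (σ j.castSucc) * MvPolynomial.C (sigVec σ j u) := by
  have hsumF : ∑ k : Fin (n + 1), yImg n k * MvPolynomial.C (Evec n k u)
      = MvPolynomial.X u := by
    rw [Fin.sum_univ_castSucc]
    have hlast : yImg n (Fin.last n) * MvPolynomial.C (Evec n (Fin.last n) u) = 0 := by
      simp [Evec]
    rw [hlast, add_zero]
    rw [Finset.sum_eq_single u (fun m _ hm => by
      simp [Evec, yImg, Pi.single_apply, Ne.symm hm]) (by simp)]
    simp [Evec, yImg]
  have hmain : (∑ j : Fin n, yImg n (σ j.castSucc) * MvPolynomial.C (Evec n (σ j.castSucc) u))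
      + yImg n (σ (Fin.last n)) * MvPolynomial.C (Evec n (σ (Fin.last n)) u)
      = MvPolynomial.X u := by
    have h := Equiv.sum_comp σ (fun k => yImg n k * MvPolynomial.C (Evec n k u))
    rw [hsumF] at h
    rw [← h, Fin.sum_univ_castSucc]
  have hy := sum_yImg σ
  have hexp : ∀ j : Fin n, yImg n (σ j.castSucc) * MvPolynomial.C (sigVec σ j u)
      = yImg n (σ j.castSucc) * MvPolynomial.C (Evec n (σ j.castSucc) u)
        - yImg n (σ j.castSucc) * MvPolynomial.C (Evec n (σ (Fin.last n)) u) := by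
    intro j
    have hs : sigVec σ j u = Evec n (σ j.castSucc) u - Evec n (σ (Fin.last n)) u := rfl
    rw [hs, map_sub]
    ring
  rw [Finset.sum_congr rfl fun j _ => hexp j, Finset.sum_sub_distrib, ← Finset.sum_mul, hy]
  linear_combination -hmain

lemma det_updateRow_finset_sum {R : Type*} [CommRing R] {m : ℕ} {α : Type*} (s : Finset α)
    (M : Matrix (Fin m) (Fin m) R) (i : Fin m) (v : α → (Fin m → R)) :
    (M.updateRow i (∑ a ∈ s, v a)).det = ∑ a ∈ s, (M.updateRow i (v a)).det :=
  (Matrix.detRowAlternating : (Fin m → R) [⋀^Fin m]→ₗ[R] R).toMultilinearMap.map_update_sum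
    s i v M

lemma claimB {q : ℕ} (σ : Perm (Fin (n + 1))) (T : TFinset n ℓ q) (W : TFinset n ℓ (q + 1)) :
    (∑ j : Fin n, if h : j ∉ T.1 then
        yImg n (σ j.castSucc) * ((-1 : Rpoly n) ^ posIn j T.1 *
          MvPolynomial.C (detCoef σ (insT T j h W.2.2) W)) else 0)
      = (Mmat σ T W).det := by
  have hM0 : (Mmat σ T W) 0 = ∑ j : Fin n, yImg n (σ j.castSucc) •
      (fun b => MvPolynomial.C (sigVec σ j (W.1.orderIsoOfFin W.2.1 b : Fin n))) := by
    funext b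
    rw [Finset.sum_apply]
    simp only [Pi.smul_apply, smul_eq_mul]
    exact X_eq_sum_sigVec σ _
  have hrow := (Matrix.updateRow_eq_self (Mmat σ T W) 0).symm
  rw [hM0] at hrow
  have hdet1 : (Mmat σ T W).det = ∑ j : Fin n, yImg n (σ j.castSucc) *
      ((Mmat σ T W).updateRow 0
        (fun b => MvPolynomial.C (sigVec σ j (W.1.orderIsoOfFin W.2.1 b : Fin n)))).det := by
    conv_lhs => rw [hrow]
    rw [det_updateRow_finset_sum]
    exact Finset.sum_congr rfl fun j _ => Matrix.det_updateRow_smul _ _ _ _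
  have hupd : ∀ j : Fin n, ((Mmat σ T W).updateRow 0
      (fun b => MvPolynomial.C (sigVec σ j (W.1.orderIsoOfFin W.2.1 b : Fin n)))).det
      = if h : j ∉ T.1 then (-1 : Rpoly n) ^ posIn j T.1
          * MvPolynomial.C (detCoef σ (insT T j h W.2.2) W) else 0 := by
    intro j
    by_cases h : j ∉ T.1
    · rw [dif_pos h]
      have hpq : posIn j T.1 < q + 1 :=
        Nat.lt_succ_of_le (le_trans (Finset.card_filter_le _ _) (le_of_eq T.2.1))
      set I : TFinset n ℓ (q + 1) := insT T j h W.2.2 with hI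
      set P : Fin (q + 1) := ⟨posIn j T.1, hpq⟩ with hP
      have hpos : posIn j I.1 = posIn j T.1 := by
        unfold posIn
        show ((insert j T.1).filter (· < j)).card = _
        rw [Finset.filter_insert, if_neg (lt_irrefl j)]
      have hIP : (I.1.orderIsoOfFin I.2.1 P : Fin n) = j := by
        have hmem : j ∈ I.1 := Finset.mem_insert_self j T.1
        have h2 := orderIsoOfFin_posIn I.1 I.2.1 hmem (by rw [hpos]; exact hpq)
        have hPP : P = ⟨posIn j I.1, by rw [hpos]; exact hpq⟩ := Fin.ext (by simp [hP, hpos])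
        rw [hPP]
        exact h2
      have hT : ∀ c : Fin q, (I.1.orderIsoOfFin I.2.1 (P.succAbove c) : Fin n)
          = (T.1.orderIsoOfFin T.2.1 c : Fin n) := by
        intro c
        have hET : I.1.erase (I.1.orderIsoOfFin I.2.1 P : Fin n) = T.1 := by
          rw [hIP]
          exact Finset.erase_insert h
        have hcard : (I.1.erase (I.1.orderIsoOfFin I.2.1 P : Fin n)).card = q := by
          rw [hET, T.2.1]
        rw [← orderIsoOfFin_erase I.1 I.2.1 P hcard c]
        exact orderIsoOfFin_congr hET hcard T.2.1 c
      set D : Matrix (Fin (q + 1)) (Fin (q + 1)) (Rpoly n) := Matrix.of fun a b =>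
        MvPolynomial.C (sigVec σ (I.1.orderIsoOfFin I.2.1 a) (W.1.orderIsoOfFin W.2.1 b))
        with hD
      have hDdet : D.det = MvPolynomial.C (detCoef σ I W) := by
        have hmap : D = (Matrix.of fun a b =>
            (sigVec σ (I.1.orderIsoOfFin I.2.1 a) (W.1.orderIsoOfFin W.2.1 b))).map
              ⇑(MvPolynomial.C : ℂ →+* Rpoly n) := rfl
        rw [hmap, ← RingHom.mapMatrix_apply, ← RingHom.map_det]
        rfl
      have hperm : (Mmat σ T W).updateRow 0
          (fun b => MvPolynomial.C (sigVec σ j (W.1.orderIsoOfFin W.2.1 b : Fin n)))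
          = D.submatrix ⇑(P.cycleRange)⁻¹ id := by
        ext a b
        rw [Matrix.submatrix_apply, id_eq]
        refine Fin.cases ?_ ?_ a
        · have h0 : (P.cycleRange)⁻¹ 0 = P := by
            rw [← Fin.cycleRange_self P]
            exact Equiv.symm_apply_apply _ _
          rw [h0]
          have : (Mmat σ T W).updateRow 0
              (fun b => MvPolynomial.C (sigVec σ j (W.1.orderIsoOfFin W.2.1 b : Fin n))) 0 b
              = MvPolynomial.C (sigVec σ j (W.1.orderIsoOfFin W.2.1 b : Fin n)) := by
            rw [Matrix.updateRow_self]
          rw [this, hD]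
          simp only [Matrix.of_apply]
          rw [hIP]
        · intro c
          have hsucc : (P.cycleRange)⁻¹ c.succ = P.succAbove c := by
            rw [← Fin.cycleRange_succAbove P c]
            exact Equiv.symm_apply_apply _ _
          rw [hsucc, Matrix.updateRow_ne (Fin.succ_ne_zero c), hD]
          simp only [Matrix.of_apply]
          rw [hT c]
          rfl
      rw [hperm, Matrix.det_permute, hDdet, Equiv.Perm.sign_inv, Fin.sign_cycleRange]
      have hPv : ((P : Fin (q + 1)) : ℕ) = posIn j T.1 := rfl
      rw [hPv]
      push_cast
      ring
    · rw [dif_neg h]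
      push_neg at h
      set c : Fin q := (T.1.orderIsoOfFin T.2.1).symm ⟨j, h⟩ with hc
      have hoc : (T.1.orderIsoOfFin T.2.1 c : Fin n) = j := by rw [hc]; simp
      refine Matrix.det_zero_of_row_eq (Fin.succ_ne_zero c).symm ?_
      funext b
      rw [Matrix.updateRow_self, Matrix.updateRow_ne (Fin.succ_ne_zero c)]
      show MvPolynomial.C (sigVec σ j (W.1.orderIsoOfFin W.2.1 b : Fin n))
        = MvPolynomial.C (sigVec σ (T.1.orderIsoOfFin T.2.1 c) (W.1.orderIsoOfFin W.2.1 b))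
      rw [hoc]
  rw [hdet1]
  refine Finset.sum_congr rfl fun j _ => ?_
  rw [hupd j]
  by_cases h : j ∉ T.1
  · rw [dif_pos h, dif_pos h]
  · rw [dif_neg h, dif_neg h, mul_zero]

lemma sum_insert_erase {q : ℕ} (hl : q + 1 ≤ ℓ) (j : Fin n) (G : TFinset n ℓ q → Rpoly n) :
    (∑ S : TFinset n ℓ (q + 1), if h : j ∈ S.1 then G (eraseT S j h) else 0)
      = ∑ T : TFinset n ℓ q, if j ∉ T.1 then G T else 0 := by
  have hL : (∑ S : TFinset n ℓ (q + 1), if h : j ∈ S.1 then G (eraseT S j h) else 0)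
      = ∑ S ∈ Finset.univ.filter (fun S : TFinset n ℓ (q + 1) => j ∈ S.1),
          (if h : j ∈ S.1 then G (eraseT S j h) else 0) :=
    (Finset.sum_subset (Finset.filter_subset _ _)
      (fun S _ hS => dif_neg (by simpa using hS))).symm
  have hR : (∑ T : TFinset n ℓ q, if j ∉ T.1 then G T else 0)
      = ∑ T ∈ Finset.univ.filter (fun T : TFinset n ℓ q => j ∉ T.1),
          (if j ∉ T.1 then G T else 0) :=
    (Finset.sum_subset (Finset.filter_subset _ _)
      (fun T _ hT => if_neg (by simpa using hT))).symm
  rw [hL, hR]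
  refine Finset.sum_bij
    (fun S hS => eraseT S j (Finset.mem_filter.mp hS).2) ?_ ?_ ?_ ?_
  · intro S hS
    exact Finset.mem_filter.mpr ⟨Finset.mem_univ _, Finset.notMem_erase j S.1⟩
  · intro S1 h1 S2 h2 he
    apply Subtype.ext
    have e1 := congrArg (fun z : TFinset n ℓ q => insert j z.1) he
    simp only [eraseT] at e1
    rwa [Finset.insert_erase (Finset.mem_filter.mp h1).2,
      Finset.insert_erase (Finset.mem_filter.mp h2).2] at e1
  · intro T hT
    refine ⟨insT T j (Finset.mem_filter.mp hT).2 hl,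
      Finset.mem_filter.mpr ⟨Finset.mem_univ _, Finset.mem_insert_self _ _⟩, ?_⟩
    apply Subtype.ext
    show (insert j T.1).erase j = T.1
    rw [Finset.erase_insert (Finset.mem_filter.mp hT).2]
  · intro S hS
    rw [dif_pos (Finset.mem_filter.mp hS).2]
    exact (if_pos (Finset.notMem_erase j S.1)).symm

lemma phiSig_comm {q : ℕ} (σ : Perm (Fin (n + 1))) (x : AomotoDeg n ℓ q (Rpoly n)) :
    dAomoto n ℓ q (phiSig ℓ σ q x) = phiSig ℓ σ (q + 1) (dAomoto n ℓ q x) := by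
  funext W
  rw [dAomoto_apply, phiSig_apply]
  have hLHS : (∑ j : Fin n, if h : j ∈ W.1 then
      MvPolynomial.X j * ((-1 : Rpoly n) ^ posIn j (W.1.erase j) *
        (phiSig ℓ σ q x) (eraseT W j h)) else 0)
      = ∑ T : TFinset n ℓ q, (Mmat σ T W).det * tauSig σ (x T) := by
    have h1 : ∀ j : Fin n, (if h : j ∈ W.1 then
        MvPolynomial.X j * ((-1 : Rpoly n) ^ posIn j (W.1.erase j) *
          (phiSig ℓ σ q x) (eraseT W j h)) else 0)
        = ∑ T : TFinset n ℓ q, (if h : j ∈ W.1 then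
            MvPolynomial.X j * ((-1 : Rpoly n) ^ posIn j (W.1.erase j) *
              MvPolynomial.C (detCoef σ T (eraseT W j h))) else 0) * tauSig σ (x T) := by
      intro j
      by_cases h : j ∈ W.1
      · rw [dif_pos h, phiSig_apply, Finset.mul_sum, Finset.mul_sum]
        refine Finset.sum_congr rfl fun T _ => ?_
        rw [dif_pos h]
        ring
      · rw [dif_neg h]
        symm
        refine Finset.sum_eq_zero fun T _ => ?_
        rw [dif_neg h, zero_mul]
    rw [Finset.sum_congr rfl fun j _ => h1 j, Finset.sum_comm]
    refine Finset.sum_congr rfl fun T _ => ?_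
    rw [← Finset.sum_mul, claimA]
  have hRHS : (∑ S : TFinset n ℓ (q + 1),
      MvPolynomial.C (detCoef σ S W) * tauSig σ (dAomoto n ℓ q x S))
      = ∑ T : TFinset n ℓ q, (Mmat σ T W).det * tauSig σ (x T) := by
    have hR1 : ∀ S : TFinset n ℓ (q + 1),
        MvPolynomial.C (detCoef σ S W) * tauSig σ (dAomoto n ℓ q x S)
        = ∑ j : Fin n, (if h : j ∈ S.1 then
            (if h2 : j ∉ (eraseT S j h).1 then
              yImg n (σ j.castSucc) * ((-1 : Rpoly n) ^ posIn j (eraseT S j h).1 *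
                MvPolynomial.C (detCoef σ (insT (eraseT S j h) j h2 W.2.2) W))
            else 0) * tauSig σ (x (eraseT S j h)) else 0) := by
      intro S
      rw [dAomoto_apply, map_sum, Finset.mul_sum]
      refine Finset.sum_congr rfl fun j _ => ?_
      by_cases h : j ∈ S.1
      · rw [dif_pos h, dif_pos h,
          dif_pos (show j ∉ (eraseT S j h).1 from Finset.notMem_erase j S.1)]
        rw [map_mul, map_mul, map_pow, map_neg, map_one, tauSig_X]
        have hins : insT (eraseT S j h) j (Finset.notMem_erase j S.1) W.2.2 = S :=
          Subtype.ext (Finset.insert_erase h)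
        rw [hins]
        show MvPolynomial.C (detCoef σ S W) * (yImg n (σ j.castSucc) *
            ((-1 : Rpoly n) ^ posIn j (S.1.erase j) * tauSig σ (x (eraseT S j h))))
          = yImg n (σ j.castSucc) * ((-1 : Rpoly n) ^ posIn j (S.1.erase j) *
              MvPolynomial.C (detCoef σ S W)) * tauSig σ (x (eraseT S j h))
        ring
      · rw [dif_neg h, dif_neg h, map_zero, mul_zero]
    rw [Finset.sum_congr rfl fun S _ => hR1 S, Finset.sum_comm]
    have h2 : ∀ j : Fin n, (∑ S : TFinset n ℓ (q + 1), if h : j ∈ S.1 then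
        (if h2 : j ∉ (eraseT S j h).1 then
          yImg n (σ j.castSucc) * ((-1 : Rpoly n) ^ posIn j (eraseT S j h).1 *
            MvPolynomial.C (detCoef σ (insT (eraseT S j h) j h2 W.2.2) W))
        else 0) * tauSig σ (x (eraseT S j h)) else 0)
        = ∑ T : TFinset n ℓ q, (if h : j ∉ T.1 then
            yImg n (σ j.castSucc) * ((-1 : Rpoly n) ^ posIn j T.1 *
              MvPolynomial.C (detCoef σ (insT T j h W.2.2) W)) else 0) * tauSig σ (x T) := by
      intro j
      have := sum_insert_erase (ℓ := ℓ) W.2.2 j (fun T => (if h : j ∉ T.1 then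
        yImg n (σ j.castSucc) * ((-1 : Rpoly n) ^ posIn j T.1 *
          MvPolynomial.C (detCoef σ (insT T j h W.2.2) W)) else 0) * tauSig σ (x T))
      rw [this]
      refine Finset.sum_congr rfl fun T _ => ?_
      by_cases h : j ∉ T.1
      · rw [if_pos h]
      · rw [if_neg h, dif_neg h, zero_mul]
    rw [Finset.sum_congr rfl fun j _ => h2 j, Finset.sum_comm]
    refine Finset.sum_congr rfl fun T _ => ?_
    rw [← Finset.sum_mul, claimB]
  exact hLHS.trans hRHS.symm

end Diff

end AuxProof

/-- **Lemma (Cohen–Orlik).** For each `σ ∈ Σ_{n+1}` the map `φ_σ` is a cochain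
automorphism of the Aomoto complex `(𝖠^•(G), e_y)` of the general position type:
it is bijective in each degree and commutes with the differential. -/
theorem phiSig_is_cochain_automorphism (n ℓ : ℕ) (σ : Equiv.Perm (Fin (n + 1))) :
    (∀ q : ℕ, Function.Bijective (phiSig ℓ σ q)) ∧
    (∀ q : ℕ, ∀ x : AomotoDeg n ℓ q (Rpoly n),
      dAomoto n ℓ q (phiSig ℓ σ q x) = phiSig ℓ σ (q + 1) (dAomoto n ℓ q x)) :=
  ⟨fun _ => phiSig_bijective σ, fun _ x => phiSig_comm σ x⟩
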